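/- Let p ≥ 5 be a prime and let m ≥ 2 be an integer. Then d(pm − 1, p, (p−1)/2) = (m − 2)/4. -/
import Mathlib


/-- Ozsváth–Szabó's recursive formula for the correction terms (d-invariants)
`d(L(p,q), i)` of lens spaces: `d(p, 0, i) = 0` and, for `q ≥ 1`,
`d(p, q, i) = -1/4 + (2i + 1 - p - q)^2 / (4pq) - d(q, p mod q, i mod q)`. -/
def lensD (p q i : ℕ) : ℚ :=
  if h : q = 0 then 0
  else -1/4 + ((2 * i + 1 - p - q : ℚ)) ^ 2 / (4 * p * q)
       - lensD q (p % q) (i % q)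
termination_by q
decreasing_by exact Nat.mod_lt _ (Nat.pos_of_ne_zero h)

/-- For `p ≥ 5` prime and `m ≥ 2`, `d(pm - 1, p, (p-1)/2) = (m - 2)/4`. -/
theorem lensD_pm_sub_one (p m : ℕ) (hp : p.Prime) (hp5 : 5 ≤ p) (hm : 2 ≤ m) :
    lensD (p * m - 1) p ((p - 1) / 2) = ((m : ℚ) - 2) / 4 := by
  have hodd : p % 2 = 1 := Nat.odd_iff.mp (hp.odd_of_ne_two (by omega))
  set i := (p - 1) / 2 with hidef
  have hi : 2 * i + 1 = p := by omega
  have hpm : 1 ≤ p * m := Nat.one_le_iff_ne_zero.mpr (Nat.mul_ne_zero (by omega) (by omega))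
  have h1 : (p * m - 1) % p = p - 1 := by
    have h : p * m - 1 = p * (m - 1) + (p - 1) := by
      have hm' : m - 1 + 1 = m := by omega
      have : p * m = p * (m - 1) + p := by rw [← hm', Nat.mul_add, Nat.mul_one, hm']
      omega
    rw [h, Nat.mul_add_mod, Nat.mod_eq_of_lt (by omega)]
  have h2 : i % p = i := Nat.mod_eq_of_lt (by omega)
  have h3 : p % (p - 1) = 1 := by
    rw [Nat.mod_eq_sub_mod (by omega), (by omega : p - (p - 1) = 1),
        Nat.mod_eq_of_lt (by omega)]
  have h4 : i % (p - 1) = i := Nat.mod_eq_of_lt (by omega)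
  rw [lensD, dif_neg (by omega : p ≠ 0), h1, h2,
      lensD, dif_neg (by omega : p - 1 ≠ 0), h3, h4,
      lensD, dif_neg (by omega : (1:ℕ) ≠ 0), Nat.mod_one, Nat.mod_one,
      lensD, dif_pos rfl]
  have hiq : 2 * (i : ℚ) + 1 = p := by exact_mod_cast congrArg (Nat.cast : ℕ → ℚ) hi
  have hc1 : ((p * m - 1 : ℕ) : ℚ) = p * m - 1 := by
    push_cast [Nat.cast_sub hpm]; ring
  have hc2 : ((p - 1 : ℕ) : ℚ) = p - 1 := by
    push_cast [Nat.cast_sub (by omega : 1 ≤ p)]; ring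
  rw [hc1, hc2]
  have hp0 : (p : ℚ) ≠ 0 := by positivity
  have hpm0 : (p : ℚ) * m - 1 ≠ 0 := by
    have : (2:ℚ) ≤ m := by exact_mod_cast hm
    nlinarith [hp.two_le, (by exact_mod_cast hp5 : (5:ℚ) ≤ p)]
  have hp10 : (p : ℚ) - 1 ≠ 0 := by
    have : (5:ℚ) ≤ p := by exact_mod_cast hp5
    linarith
  rw [hiq]
  field_simp
  ring
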